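/- Let (Ω₁, μ₁) and (Ω₂, μ₂) be probability spaces and H = L²(μ₁ ⊗ μ₂; ℂ). For all essentially bounded measurable f : Ω₁ → ℝ and g : Ω₂ → ℝ one has φ(M g ∘ T f ∘ M g) = (∫ g dμ₂)² · ∫ f dμ₁. Consequently, if ∫ g² dμ₂ ≠ (∫ g dμ₂)² (i.e. g is not μ₂-a.e. constant) and ∫ f dμ₁ ≠ 0, then φ(M g ∘ T f ∘ M g) ≠ (∫ g² dμ₂) · ∫ f dμ₁; hence the pair of algebras in the reversed order ({M g}, {T f}) fails the monotone independence factorization: monotone independence is not symmetric. -/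

import Mathlib

open MeasureTheory
open scoped ENNReal

/-- **Monotone independence is not symmetric.** On `H = L²(μ₁ ⊗ μ₂; ℂ)`, for real essentially
bounded measurable `f : Ω₁ → ℝ` and `g : Ω₂ → ℝ` and the operators `T f = f ⊗ |1⟩⟨1|`,
`M g = id ⊗ g`, the vector state `φ(S) = ⟪𝟙, S 𝟙⟫` satisfies
`φ(M g ∘ T f ∘ M g) = (∫ g dμ₂)² · ∫ f dμ₁`.  Hence if `∫ g² dμ₂ ≠ (∫ g dμ₂)²` and
`∫ f dμ₁ ≠ 0`, then `φ(M g ∘ T f ∘ M g) ≠ (∫ g² dμ₂) · ∫ f dμ₁`: the reversed pair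
`({M g}, {T f})` fails the monotone independence factorization. -/
theorem monotone_independence_not_symmetric
    {Ω₁ Ω₂ : Type*} [MeasurableSpace Ω₁] [MeasurableSpace Ω₂]
    (μ₁ : Measure Ω₁) (μ₂ : Measure Ω₂) [IsProbabilityMeasure μ₁] [IsProbabilityMeasure μ₂]
    (f : Ω₁ → ℝ) (g : Ω₂ → ℝ)
    (hfm : Measurable f) (hfb : MemLp f ⊤ μ₁)
    (hgm : Measurable g) (hgb : MemLp g ⊤ μ₂)
    (Tf Mg : Lp ℂ 2 (μ₁.prod μ₂) →L[ℂ] Lp ℂ 2 (μ₁.prod μ₂))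
    (hTf : ∀ h : Lp ℂ 2 (μ₁.prod μ₂), (Tf h : Ω₁ × Ω₂ → ℂ) =ᵐ[μ₁.prod μ₂]
      fun p => (f p.1 : ℂ) * ∫ y, (h : Ω₁ × Ω₂ → ℂ) (p.1, y) ∂μ₂)
    (hMg : ∀ h : Lp ℂ 2 (μ₁.prod μ₂), (Mg h : Ω₁ × Ω₂ → ℂ) =ᵐ[μ₁.prod μ₂]
      fun p => (g p.2 : ℂ) * (h : Ω₁ × Ω₂ → ℂ) p)
    (one : Lp ℂ 2 (μ₁.prod μ₂)) (hone : (one : Ω₁ × Ω₂ → ℂ) =ᵐ[μ₁.prod μ₂] fun _ => 1) :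
    @inner ℂ _ _ one ((Mg * Tf * Mg) one)
        = ((∫ y, g y ∂μ₂ : ℝ) : ℂ) ^ 2 * ((∫ x, f x ∂μ₁ : ℝ) : ℂ) ∧
      ((∫ y, (g y) ^ 2 ∂μ₂ ≠ (∫ y, g y ∂μ₂) ^ 2) → (∫ x, f x ∂μ₁ ≠ 0) →
        @inner ℂ _ _ one ((Mg * Tf * Mg) one)
          ≠ ((∫ y, (g y) ^ 2 ∂μ₂ : ℝ) : ℂ) * ((∫ x, f x ∂μ₁ : ℝ) : ℂ)) := by
  have hfi : Integrable f μ₁ := memLp_one_iff_integrable.mp (hfb.mono_exponent le_top)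
  have hgi : Integrable g μ₂ := memLp_one_iff_integrable.mp (hgb.mono_exponent le_top)
  set c : ℂ := ∫ y, (g y : ℂ) ∂μ₂ with hc
  have hcval : c = ((∫ y, g y ∂μ₂ : ℝ) : ℂ) := by rw [hc]; exact integral_ofReal
  have hA : (Mg one : Ω₁ × Ω₂ → ℂ) =ᵐ[μ₁.prod μ₂] fun p => (g p.2 : ℂ) := by
    filter_upwards [hMg one, hone] with p h1 h2
    rw [h1, h2, mul_one]
  have hB : ∀ᵐ x ∂μ₁, ∫ y, (Mg one : Ω₁ × Ω₂ → ℂ) (x, y) ∂μ₂ = c := by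
    filter_upwards [Measure.ae_ae_of_ae_prod hA] with x hx
    exact integral_congr_ae hx
  have hB' : ∀ᵐ p ∂(μ₁.prod μ₂), ∫ y, (Mg one : Ω₁ × Ω₂ → ℂ) (p.1, y) ∂μ₂ = c :=
    Measure.quasiMeasurePreserving_fst.ae hB
  have hC : (Tf (Mg one) : Ω₁ × Ω₂ → ℂ) =ᵐ[μ₁.prod μ₂] fun p => (f p.1 : ℂ) * c := by
    filter_upwards [hTf (Mg one), hB'] with p h1 h2
    rw [h1, h2]
  have hD : ((Mg * Tf * Mg) one : Ω₁ × Ω₂ → ℂ)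
      =ᵐ[μ₁.prod μ₂] fun p => ((f p.1 : ℂ) * (g p.2 : ℂ)) * c := by
    have heq : (Mg * Tf * Mg) one = Mg (Tf (Mg one)) := by
      simp [ContinuousLinearMap.mul_apply]
    rw [heq]
    filter_upwards [hMg (Tf (Mg one)), hC] with p h1 h2
    rw [h1, h2]; ring
  have key : @inner ℂ _ _ one ((Mg * Tf * Mg) one)
      = ((∫ y, g y ∂μ₂ : ℝ) : ℂ) ^ 2 * ((∫ x, f x ∂μ₁ : ℝ) : ℂ) := by
    rw [L2.inner_def]
    have h0 : ∫ p, @inner ℂ _ _ ((one : Ω₁ × Ω₂ → ℂ) p)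
          (((Mg * Tf * Mg) one : Ω₁ × Ω₂ → ℂ) p) ∂(μ₁.prod μ₂)
        = ∫ p : Ω₁ × Ω₂, ((f p.1 : ℂ) * (g p.2 : ℂ)) * c ∂(μ₁.prod μ₂) := by
      refine integral_congr_ae ?_
      filter_upwards [hone, hD] with p h1 h2
      rw [h1, h2]
      simp
    rw [h0, integral_mul_const, integral_prod_mul (fun x => (f x : ℂ)) (fun y => (g y : ℂ)),
      show (∫ x, (f x : ℂ) ∂μ₁) = ((∫ x, f x ∂μ₁ : ℝ) : ℂ) from integral_ofReal,
      show (∫ y, (g y : ℂ) ∂μ₂) = ((∫ y, g y ∂μ₂ : ℝ) : ℂ) from integral_ofReal, hcval]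
    ring
  refine ⟨key, fun h1 h2 => ?_⟩
  rw [key]
  intro heq
  have hfc : ((∫ x, f x ∂μ₁ : ℝ) : ℂ) ≠ 0 := Complex.ofReal_ne_zero.mpr h2
  have h3 := mul_right_cancel₀ hfc heq
  apply h1
  have h4 : ((∫ y, g y ∂μ₂ : ℝ) : ℂ) ^ 2 = ((∫ y, (g y) ^ 2 ∂μ₂ : ℝ) : ℂ) := h3
  exact_mod_cast h4.symm
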